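/- In the randomized-policy MDP setup, let θ and θ' be randomized policies and for ε ∈ [0,1] let θ_ε = θ + ε•(θ' - θ) (which is again a randomized policy). Suppose stationary distributions π^{θ_ε} are chosen so that π^{θ_ε} i → π^θ i for all i as ε → 0⁺ and (J^{θ_ε}_μ - J^θ_μ)/ε converges to a finite limit as ε → 0⁺. If g^θ is a performance potential for θ, then lim_{ε→0⁺} (J^{θ_ε}_{μ,σ} - J^{θ}_{μ,σ})/ε = ∑_i π^θ i * ∑_a (θ' i a - θ i a) * ( ∑_j p a i j * g^θ j + r i a - β*(r i a)^2 + 2*β*J^θ_μ*(r i a) ). -/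

import Mathlib

open Filter Topology

/-- Performance derivative formula in the randomized policy space (Lemma 3),
stated as a one-sided directional derivative from θ toward θ'. -/
theorem mean_variance_randomized_policy_derivative
    (S : ℕ) (hS : 1 ≤ S) (A : Type) [Fintype A] [Nonempty A]
    (p : A → Matrix (Fin S) (Fin S) ℝ)
    (hp0 : ∀ a i j, 0 ≤ p a i j) (hp1 : ∀ a i, ∑ j, p a i j = 1)
    (r : Fin S → A → ℝ) (β : ℝ)
    (θ θ' : Fin S → A → ℝ)
    (hθ0 : ∀ i a, 0 ≤ θ i a) (hθ1 : ∀ i, ∑ a, θ i a = 1)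
    (hθ'0 : ∀ i a, 0 ≤ θ' i a) (hθ'1 : ∀ i, ∑ a, θ' i a = 1)
    (πθ : Fin S → ℝ)
    (hπθ0 : ∀ i, 0 ≤ πθ i) (hπθ1 : ∑ i, πθ i = 1)
    (hπθstat : ∀ j, ∑ i, πθ i * (∑ a, θ i a * p a i j) = πθ j)
    (Jmu Jms : ℝ)
    (hJmu : Jmu = ∑ i, πθ i * ∑ a, θ i a * r i a)
    (hJms : Jms = ∑ i, πθ i * ∑ a, θ i a * (r i a - β * (r i a - Jmu) ^ 2))
    (g : Fin S → ℝ)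
    (hg : ∀ i, g i = (∑ a, θ i a * (r i a - β * (r i a - Jmu) ^ 2)) - Jms
      + ∑ j, (∑ a, θ i a * p a i j) * g j)
    -- the intermediate policies θ_ε = θ + ε • (θ' - θ) and their data
    (πε : ℝ → Fin S → ℝ)
    (hπε0 : ∀ ε ∈ Set.Ioc (0 : ℝ) 1, ∀ i, 0 ≤ πε ε i)
    (hπε1 : ∀ ε ∈ Set.Ioc (0 : ℝ) 1, ∑ i, πε ε i = 1)
    (hπεstat : ∀ ε ∈ Set.Ioc (0 : ℝ) 1, ∀ j,
      ∑ i, πε ε i * (∑ a, (θ i a + ε * (θ' i a - θ i a)) * p a i j) = πε ε j)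
    (hπεtend : ∀ i, Tendsto (fun ε => πε ε i) (𝓝[>] (0 : ℝ)) (𝓝 (πθ i)))
    (Jεmu : ℝ → ℝ)
    (hJεmu : ∀ ε, Jεmu ε = ∑ i, πε ε i * ∑ a, (θ i a + ε * (θ' i a - θ i a)) * r i a)
    (L : ℝ)
    (hL : Tendsto (fun ε => (Jεmu ε - Jmu) / ε) (𝓝[>] (0 : ℝ)) (𝓝 L))
    (Jεms : ℝ → ℝ)
    (hJεms : ∀ ε, Jεms ε = ∑ i, πε ε i * ∑ a, (θ i a + ε * (θ' i a - θ i a)) *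
      (r i a - β * (r i a - Jεmu ε) ^ 2)) :
    Tendsto (fun ε => (Jεms ε - Jms) / ε) (𝓝[>] (0 : ℝ))
      (𝓝 (∑ i, πθ i * ∑ a, (θ' i a - θ i a) *
        ((∑ j, p a i j * g j) + r i a - β * (r i a) ^ 2 + 2 * β * Jmu * r i a))) := by

  classical
  -- f with J = Jmu, rearranged potential equation
  have hf : ∀ i, (∑ a, θ i a * (r i a - β * (r i a - Jmu) ^ 2))
      = g i + Jms - ∑ j, (∑ a, θ i a * p a i j) * g j := fun i => by linarith [hg i]
  have hIoc : Set.Ioc (0:ℝ) 1 ∈ 𝓝[>] (0:ℝ) :=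
    Ioc_mem_nhdsGT_of_mem ⟨le_refl 0, one_pos⟩
  -- Key algebraic identity
  have key : ∀ ε ∈ Set.Ioc (0:ℝ) 1, (Jεms ε - Jms) / ε
      = (∑ i, πε ε i * ∑ a, (θ' i a - θ i a) *
          ((∑ j, p a i j * g j) + r i a - β * (r i a - Jεmu ε) ^ 2))
        + β * ((Jεmu ε - Jmu) / ε) *
          (∑ i, πε ε i * ∑ a, θ i a * (2 * r i a - Jmu - Jεmu ε)) := by
    intro ε hε
    have hεne : ε ≠ 0 := ne_of_gt hε.1
    have hsum1 := hπε1 ε hε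
    have hstat := hπεstat ε hε
    have hgsum : ∑ i, πε ε i * g i
        = ∑ i, πε ε i * ∑ j, (∑ a, (θ i a + ε * (θ' i a - θ i a)) * p a i j) * g j := by
      calc ∑ i, πε ε i * g i
          = ∑ j, (∑ i, πε ε i * (∑ a, (θ i a + ε * (θ' i a - θ i a)) * p a i j)) * g j := by
            refine (Finset.sum_congr rfl fun j _ => ?_).symm
            rw [hstat j]
        _ = ∑ i, πε ε i * ∑ j, (∑ a, (θ i a + ε * (θ' i a - θ i a)) * p a i j) * g j := by
            simp only [Finset.sum_mul]
            rw [Finset.sum_comm]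
            simp only [Finset.mul_sum, Finset.sum_mul, mul_assoc]
    have e12 : ∑ i, πε ε i * ∑ a, θ i a * (r i a - β * (r i a - Jmu) ^ 2)
        = (∑ i, πε ε i * g i) + Jms * (∑ i, πε ε i)
          - ∑ i, πε ε i * ∑ j, (∑ a, θ i a * p a i j) * g j := by
      rw [Finset.mul_sum, ← Finset.sum_add_distrib, ← Finset.sum_sub_distrib]
      exact Finset.sum_congr rfl fun i _ => by rw [hf i]; ring
    have e3 : ∀ i, ∑ j, (∑ a, (θ i a + ε * (θ' i a - θ i a)) * p a i j) * g j
        - ∑ j, (∑ a, θ i a * p a i j) * g j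
        = ε * ∑ a, (θ' i a - θ i a) * ∑ j, p a i j * g j := by
      intro i
      rw [← Finset.sum_sub_distrib]
      have h1 : ∀ j ∈ (Finset.univ : Finset (Fin S)),
          (∑ a, (θ i a + ε * (θ' i a - θ i a)) * p a i j) * g j
            - (∑ a, θ i a * p a i j) * g j
          = ∑ a, ε * ((θ' i a - θ i a) * (p a i j * g j)) := by
        intro j _
        rw [← sub_mul, ← Finset.sum_sub_distrib, Finset.sum_mul]
        exact Finset.sum_congr rfl fun a _ => by ring
      rw [Finset.sum_congr rfl h1, Finset.sum_comm, Finset.mul_sum]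
      exact Finset.sum_congr rfl fun a _ => by rw [Finset.mul_sum, Finset.mul_sum]
    have e3s : (∑ i, πε ε i * ∑ j, (∑ a, (θ i a + ε * (θ' i a - θ i a)) * p a i j) * g j)
        - (∑ i, πε ε i * ∑ j, (∑ a, θ i a * p a i j) * g j)
        = ε * ∑ i, πε ε i * ∑ a, (θ' i a - θ i a) * ∑ j, p a i j * g j := by
      rw [← Finset.sum_sub_distrib, Finset.mul_sum]
      exact Finset.sum_congr rfl fun i _ => by rw [← mul_sub, e3 i]; ring
    have splitA : (∑ i, πε ε i * ∑ a, (θ' i a - θ i a) *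
          ((∑ j, p a i j * g j) + r i a - β * (r i a - Jεmu ε) ^ 2))
        = (∑ i, πε ε i * ∑ a, (θ' i a - θ i a) * ∑ j, p a i j * g j)
          + ∑ i, πε ε i * ∑ a, (θ' i a - θ i a) * (r i a - β * (r i a - Jεmu ε) ^ 2) := by
      rw [← Finset.sum_add_distrib]
      refine Finset.sum_congr rfl fun i _ => ?_
      rw [← mul_add, ← Finset.sum_add_distrib]
      exact congrArg _ (Finset.sum_congr rfl fun a _ => by ring)
    have expand : Jεms ε
        = (∑ i, πε ε i * ∑ a, θ i a * (r i a - β * (r i a - Jmu) ^ 2))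
          + β * (Jεmu ε - Jmu) * (∑ i, πε ε i * ∑ a, θ i a * (2 * r i a - Jmu - Jεmu ε))
          + ε * ∑ i, πε ε i * ∑ a, (θ' i a - θ i a) * (r i a - β * (r i a - Jεmu ε) ^ 2) := by
      rw [hJεms]
      simp only [Finset.mul_sum, ← Finset.sum_add_distrib]
      exact Finset.sum_congr rfl fun i _ => Finset.sum_congr rfl fun a _ => by ring
    have keymul : Jεms ε - Jms
        = ε * (∑ i, πε ε i * ∑ a, (θ' i a - θ i a) *
            ((∑ j, p a i j * g j) + r i a - β * (r i a - Jεmu ε) ^ 2))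
          + β * (Jεmu ε - Jmu) *
            (∑ i, πε ε i * ∑ a, θ i a * (2 * r i a - Jmu - Jεmu ε)) := by
      linear_combination expand + e12 + hgsum + Jms * hsum1 + e3s - ε * splitA
    rw [keymul]
    field_simp
  -- limits
  have hεlim : Tendsto (fun ε : ℝ => ε) (𝓝[>] (0:ℝ)) (𝓝 0) :=
    tendsto_id.mono_right nhdsWithin_le_nhds
  have hJεtend : Tendsto Jεmu (𝓝[>] (0:ℝ)) (𝓝 Jmu) := by
    have h1 : Tendsto (fun ε => ((Jεmu ε - Jmu) / ε) * ε + Jmu) (𝓝[>] (0:ℝ))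
        (𝓝 (L * 0 + Jmu)) := (hL.mul hεlim).add tendsto_const_nhds
    rw [show L * 0 + Jmu = Jmu by ring] at h1
    refine h1.congr' ?_
    filter_upwards [self_mem_nhdsWithin] with ε hε
    have : ε ≠ 0 := ne_of_gt (hε : (0:ℝ) < ε)
    field_simp
    ring
  have hAtend : Tendsto (fun ε => ∑ i, πε ε i * ∑ a, (θ' i a - θ i a) *
        ((∑ j, p a i j * g j) + r i a - β * (r i a - Jεmu ε) ^ 2)) (𝓝[>] (0:ℝ))
      (𝓝 (∑ i, πθ i * ∑ a, (θ' i a - θ i a) *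
        ((∑ j, p a i j * g j) + r i a - β * (r i a - Jmu) ^ 2))) := by
    refine tendsto_finset_sum _ fun i _ => (hπεtend i).mul ?_
    have hc : Continuous fun x : ℝ => ∑ a, (θ' i a - θ i a) *
        ((∑ j, p a i j * g j) + r i a - β * (r i a - x) ^ 2) := by fun_prop
    exact (hc.tendsto Jmu).comp hJεtend
  have hCtend : Tendsto (fun ε => ∑ i, πε ε i * ∑ a, θ i a * (2 * r i a - Jmu - Jεmu ε))
      (𝓝[>] (0:ℝ)) (𝓝 (∑ i, πθ i * ∑ a, θ i a * (2 * r i a - Jmu - Jmu))) := by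
    refine tendsto_finset_sum _ fun i _ => (hπεtend i).mul ?_
    have hc : Continuous fun x : ℝ => ∑ a, θ i a * (2 * r i a - Jmu - x) := by fun_prop
    exact (hc.tendsto Jmu).comp hJεtend
  have hC0 : (∑ i, πθ i * ∑ a, θ i a * (2 * r i a - Jmu - Jmu)) = 0 := by
    have h1 : ∀ i ∈ (Finset.univ : Finset (Fin S)),
        πθ i * ∑ a, θ i a * (2 * r i a - Jmu - Jmu)
        = 2 * (πθ i * ∑ a, θ i a * r i a) - 2 * Jmu * πθ i := by
      intro i _
      have h2 : ∑ a, θ i a * (2 * r i a - Jmu - Jmu)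
          = 2 * (∑ a, θ i a * r i a) - (2 * Jmu) * (∑ a, θ i a) := by
        rw [Finset.mul_sum, Finset.mul_sum, ← Finset.sum_sub_distrib]
        exact Finset.sum_congr rfl fun a _ => by ring
      rw [h2, hθ1 i]; ring
    rw [Finset.sum_congr rfl h1, Finset.sum_sub_distrib, ← Finset.mul_sum, ← Finset.mul_sum,
      ← hJmu, hπθ1]
    ring
  have hA0T : (∑ i, πθ i * ∑ a, (θ' i a - θ i a) *
        ((∑ j, p a i j * g j) + r i a - β * (r i a - Jmu) ^ 2))
      = ∑ i, πθ i * ∑ a, (θ' i a - θ i a) *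
        ((∑ j, p a i j * g j) + r i a - β * (r i a) ^ 2 + 2 * β * Jmu * r i a) := by
    refine Finset.sum_congr rfl fun i _ => ?_
    have hΔ : ∑ a, (θ' i a - θ i a) = 0 := by
      rw [Finset.sum_sub_distrib, hθ'1 i, hθ1 i]; ring
    have h3 : ∑ a, (θ' i a - θ i a) * ((∑ j, p a i j * g j) + r i a - β * (r i a - Jmu) ^ 2)
        = (∑ a, (θ' i a - θ i a) *
            ((∑ j, p a i j * g j) + r i a - β * (r i a) ^ 2 + 2 * β * Jmu * r i a))
          - (β * Jmu ^ 2) * ∑ a, (θ' i a - θ i a) := by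
      rw [Finset.mul_sum, ← Finset.sum_sub_distrib]
      exact Finset.sum_congr rfl fun a _ => by ring
    rw [h3, hΔ]; ring
  have main : Tendsto (fun ε =>
      (∑ i, πε ε i * ∑ a, (θ' i a - θ i a) *
          ((∑ j, p a i j * g j) + r i a - β * (r i a - Jεmu ε) ^ 2))
        + β * ((Jεmu ε - Jmu) / ε) *
          (∑ i, πε ε i * ∑ a, θ i a * (2 * r i a - Jmu - Jεmu ε))) (𝓝[>] (0:ℝ))
      (𝓝 ((∑ i, πθ i * ∑ a, (θ' i a - θ i a) *
          ((∑ j, p a i j * g j) + r i a - β * (r i a - Jmu) ^ 2))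
        + β * L * (∑ i, πθ i * ∑ a, θ i a * (2 * r i a - Jmu - Jmu)))) :=
    hAtend.add (((tendsto_const_nhds.mul hL).mul hCtend))
  rw [hC0, mul_zero, add_zero, hA0T] at main
  refine main.congr' ?_
  filter_upwards [hIoc] with ε hε
  exact (key ε hε).symm
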